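/- arXiv:2505.13288 — 6 statements merged into one kernel-verified Lean document; each statement's English description precedes it below -/
import Mathlib

section
/- Let v_1 > v_2 > ⋯ > v_n be real numbers with ∑ v_i = 0, and let {1,…,n} = S_1 ⊔ S_2 be a partition into two nonempty subsets with ∑_{i∈S_1} v_i = 0 and ∑_{i∈S_2} v_i = 0. Writing S_1 = {i_1 < ⋯ < i_{ℓ_1}} and S_2 = {j_1 < ⋯ < j_{ℓ_2}} in increasing order, one has ∑_{k=1}^{ℓ_1−1}(v_{i_1}+⋯+v_{i_k}) + ∑_{k=1}^{ℓ_2−1}(v_{j_1}+⋯+v_{j_k}) < ∑_{k=1}^{n−1}(v_1+⋯+v_k). -/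
open Finset

/-- `partialSums v S = ∑_{k=1}^{|S|-1} (v_{i_1} + ⋯ + v_{i_k})` where
`S = {i_1 < i_2 < ⋯ < i_ℓ}` is listed in increasing order. -/
noncomputable def partialSums (v : ℕ → ℝ) (S : Finset ℕ) : ℝ :=
  ∑ k : Fin (S.card - 1), ∑ t : Fin (k.1 + 1),
    v ((S.orderIsoOfFin rfl ⟨t.1, Nat.lt_of_lt_of_le t.isLt
        (by have := k.isLt; omega)⟩ : {x // x ∈ S}) : ℕ)

lemma aux_tri (g : ℕ → ℝ) (m : ℕ) :
    ∑ k ∈ range m, ∑ t ∈ range (k+1), g t = ∑ t ∈ range m, ((m:ℝ) - t) * g t := by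
  induction m with
  | zero => simp
  | succ m ih =>
    rw [Finset.sum_range_succ, ih, Finset.sum_range_succ]
    push_cast
    rw [Finset.sum_range_succ (f := fun t => ((m:ℝ)+1-t) * g t)]
    have : ∑ x ∈ range m, ((m:ℝ) + 1 - x) * g x
        = ∑ x ∈ range m, (((m:ℝ) - x) * g x + g x) := by
      apply Finset.sum_congr rfl; intro x hx; ring
    rw [this, Finset.sum_add_distrib]
    ring

lemma aux_rank (S : Finset ℕ) (t : Fin S.card) :
    (S.filter (fun j => j < S.orderEmbOfFin rfl t)).card = t.1 := by
  have : S.filter (fun j => j < S.orderEmbOfFin rfl t)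
      = (Finset.Iio t).image (fun s => S.orderEmbOfFin rfl s) := by
    ext j
    simp only [mem_filter, mem_image, Finset.mem_Iio]
    constructor
    · rintro ⟨hjS, hjt⟩
      set e := S.orderIsoOfFin rfl
      refine ⟨e.symm ⟨j, hjS⟩, ?_, ?_⟩
      · rw [← e.lt_iff_lt]
        simp only [OrderIso.apply_symm_apply, e]
        exact hjt
      · show ((e (e.symm ⟨j, hjS⟩) : {x // x ∈ S}) : ℕ) = j
        simp
    · rintro ⟨s, hst, rfl⟩
      exact ⟨Finset.orderEmbOfFin_mem _ _ _, (S.orderEmbOfFin rfl).strictMono hst⟩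
  rw [this, Finset.card_image_of_injective _ (S.orderEmbOfFin rfl).injective, Fin.card_Iio]

lemma aux_repr (v : ℕ → ℝ) (S : Finset ℕ) (hS : S.Nonempty) (hsum : ∑ i ∈ S, v i = 0) :
    partialSums v S = -∑ i ∈ S, ((S.filter (· < i)).card : ℝ) * v i := by
  classical
  set ℓ := S.card with hℓ
  have hℓ1 : 1 ≤ ℓ := Finset.card_pos.mpr hS
  set g : ℕ → ℝ := fun t => if h : t < ℓ then v (S.orderEmbOfFin rfl ⟨t, h⟩) else 0 with hg
  -- step 1: partialSums = double range sum of g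
  have step1 : partialSums v S = ∑ k ∈ range (ℓ-1), ∑ t ∈ range (k+1), g t := by
    rw [partialSums]
    rw [← Fin.sum_univ_eq_sum_range (fun k => ∑ t ∈ range (k+1), g t) (ℓ-1)]
    apply Finset.sum_congr rfl
    intro k _
    rw [← Fin.sum_univ_eq_sum_range (fun t => g t) (k.1+1)]
    apply Finset.sum_congr rfl
    intro t _
    have ht : t.1 < ℓ := Nat.lt_of_lt_of_le t.isLt (by have := k.isLt; omega)
    simp only [hg, dif_pos ht]
    rfl
  -- step 2: each range-ℓ sum over g corresponds to a sum over S
  have bij : ∀ F : ℕ → ℝ → ℝ,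
      ∑ t ∈ range ℓ, F t (g t) = ∑ i ∈ S, F ((S.filter (· < i)).card) (v i) := by
    intro F
    apply Finset.sum_bij (i := fun t ht => (S.orderEmbOfFin rfl ⟨t, Finset.mem_range.mp ht⟩ : ℕ))
    · intro t ht; exact Finset.orderEmbOfFin_mem _ _ _
    · intro a ha b hb hab
      have := (S.orderEmbOfFin rfl).injective hab
      simpa using congrArg Fin.val this
    · intro i hi
      refine ⟨((S.orderIsoOfFin rfl).symm ⟨i, hi⟩ : Fin ℓ).1, Finset.mem_range.mpr (Fin.isLt _), ?_⟩
      show ((S.orderIsoOfFin rfl) ((S.orderIsoOfFin rfl).symm ⟨i, hi⟩) : ℕ) = i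
      simp
    · intro t ht
      have ht' : t < ℓ := Finset.mem_range.mp ht
      rw [aux_rank S ⟨t, ht'⟩]
      simp only [hg, dif_pos ht']
  have h0 : ∑ t ∈ range ℓ, g t = 0 := by
    rw [bij (fun _ x => x)]; exact hsum
  have h1 : ∑ t ∈ range ℓ, (t:ℝ) * g t
      = ∑ i ∈ S, ((S.filter (· < i)).card : ℝ) * v i := bij (fun r x => (r:ℝ) * x)
  obtain ⟨m, hm⟩ : ∃ m, ℓ = m + 1 := ⟨ℓ-1, by omega⟩
  rw [step1, aux_tri, show ℓ - 1 = m from by omega]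
  have key : ∑ t ∈ range (m+1), ((m:ℝ) - t) * g t
      = ∑ t ∈ range m, ((m:ℝ) - t) * g t := by
    rw [Finset.sum_range_succ]; simp
  have expand : ∑ t ∈ range (m+1), ((m:ℝ) - t) * g t
      = (m:ℝ) * (∑ t ∈ range (m+1), g t) - ∑ t ∈ range (m+1), (t:ℝ) * g t := by
    rw [Finset.mul_sum, ← Finset.sum_sub_distrib]
    apply Finset.sum_congr rfl; intro x hx; ring
  rw [← key, expand, ← hm, h0, h1]; ring

theorem block_partial_sums_lt (n : ℕ) (hn : 2 ≤ n) (v : ℕ → ℝ)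
    (hdec : ∀ i j, i < j → j < n → v j < v i)
    (hsum : ∑ i ∈ Finset.range n, v i = 0)
    (S1 S2 : Finset ℕ) (hpart : S1 ∪ S2 = Finset.range n)
    (hdisj : Disjoint S1 S2)
    (h1 : S1.Nonempty) (h2 : S2.Nonempty)
    (hs1 : ∑ i ∈ S1, v i = 0) (hs2 : ∑ i ∈ S2, v i = 0) :
    partialSums v S1 + partialSums v S2 < partialSums v (Finset.range n) := by
  classical
  have hmem1 : ∀ i ∈ S1, i < n := fun i hi =>
    Finset.mem_range.mp (hpart ▸ Finset.mem_union_left S2 hi)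
  have hmem2 : ∀ j ∈ S2, j < n := fun j hj =>
    Finset.mem_range.mp (hpart ▸ Finset.mem_union_right S1 hj)
  have hne : ∀ i ∈ S1, ∀ j ∈ S2, i ≠ j := by
    intro i hi j hj h
    exact (Finset.disjoint_left.mp hdisj hi) (h ▸ hj)
  rw [aux_repr v S1 h1 hs1, aux_repr v S2 h2 hs2,
    aux_repr v (Finset.range n) ⟨0, Finset.mem_range.mpr (by omega)⟩ hsum]
  -- decompose the range-n rank as sum of block ranks
  have hA : ∑ i ∈ Finset.range n, (((Finset.range n).filter (· < i)).card : ℝ) * v i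
      = (∑ i ∈ S1, ((S1.filter (· < i)).card : ℝ) * v i
          + ∑ i ∈ S1, ((S2.filter (· < i)).card : ℝ) * v i)
        + (∑ i ∈ S2, ((S1.filter (· < i)).card : ℝ) * v i
          + ∑ i ∈ S2, ((S2.filter (· < i)).card : ℝ) * v i) := by
    have hfilt : ∀ i ∈ Finset.range n,
        (((Finset.range n).filter (· < i)).card : ℝ)
          = ((S1.filter (· < i)).card : ℝ) + ((S2.filter (· < i)).card : ℝ) := by
      intro i _
      rw [← hpart, Finset.filter_union,
        Finset.card_union_of_disjoint (Finset.disjoint_filter_filter hdisj)]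
      push_cast; ring
    rw [Finset.sum_congr rfl (fun i hi => by rw [hfilt i hi]), ← hpart,
      Finset.sum_union hdisj]
    congr 1 <;>
      (rw [← Finset.sum_add_distrib]; apply Finset.sum_congr rfl; intro i _; ring)
  rw [hA]
  have hT : ∑ i ∈ S1, ((S2.filter (· < i)).card : ℝ) * v i
      + ∑ i ∈ S2, ((S1.filter (· < i)).card : ℝ) * v i < 0 := by
    -- rewrite each as a double sum
    have rep1 : ∑ i ∈ S1, ((S2.filter (· < i)).card : ℝ) * v i
        = ∑ i ∈ S1, ∑ j ∈ S2, (if j < i then v i else 0) := by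
      apply Finset.sum_congr rfl; intro i _
      rw [← Finset.sum_filter, Finset.sum_const, nsmul_eq_mul]
    have rep2 : ∑ j ∈ S2, ((S1.filter (· < j)).card : ℝ) * v j
        = ∑ i ∈ S1, ∑ j ∈ S2, (if i < j then v j else 0) := by
      rw [Finset.sum_comm]
      apply Finset.sum_congr rfl; intro j _
      rw [← Finset.sum_filter, Finset.sum_const, nsmul_eq_mul]
    rw [rep1, rep2, ← Finset.sum_add_distrib,
      Finset.sum_congr rfl (fun (x : ℕ) (_ : x ∈ S1) =>
        (Finset.sum_add_distrib (s := S2)).symm)]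
    rw [← Finset.sum_product' (f := fun i j => (if j < i then v i else 0) + (if i < j then v j else 0))]
    set E := ∑ p ∈ S1 ×ˢ S2,
      ((if p.2 < p.1 then v p.1 else 0) + (if p.1 < p.2 then v p.2 else 0)) with hE
    have hEE' : E + ∑ p ∈ S1 ×ˢ S2,
        ((if p.2 < p.1 then v p.2 else 0) + (if p.1 < p.2 then v p.1 else 0)) = 0 := by
      rw [hE, ← Finset.sum_add_distrib]
      have : ∀ p ∈ S1 ×ˢ S2,
          ((if p.2 < p.1 then v p.1 else 0) + (if p.1 < p.2 then v p.2 else 0))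
          + ((if p.2 < p.1 then v p.2 else 0) + (if p.1 < p.2 then v p.1 else 0))
          = v p.1 + v p.2 := by
        intro p hp
        obtain ⟨hp1, hp2⟩ := Finset.mem_product.mp hp
        rcases lt_or_gt_of_ne (hne _ hp1 _ hp2) with h | h
        · rw [if_neg (by omega), if_pos h, if_neg (by omega), if_pos h]; ring
        · rw [if_pos h, if_neg (by omega), if_pos h, if_neg (by omega)]; ring
      rw [Finset.sum_congr rfl this, Finset.sum_product (f := fun p => v p.1 + v p.2)]
      have hrow : ∀ i, ∑ j ∈ S2, (v i + v j) = (S2.card : ℝ) * v i := by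
        intro i; rw [Finset.sum_add_distrib, hs2, Finset.sum_const, nsmul_eq_mul]; ring
      rw [Finset.sum_congr rfl (fun i _ => hrow i), ← Finset.mul_sum, hs1, mul_zero]
    have hlt : E < ∑ p ∈ S1 ×ˢ S2,
        ((if p.2 < p.1 then v p.2 else 0) + (if p.1 < p.2 then v p.1 else 0)) := by
      apply Finset.sum_lt_sum_of_nonempty (h1.product h2)
      intro p hp
      obtain ⟨hp1, hp2⟩ := Finset.mem_product.mp hp
      rcases lt_or_gt_of_ne (hne _ hp1 _ hp2) with h | h
      · rw [if_neg (by omega), if_pos h, if_neg (by omega), if_pos h]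
        simpa using hdec _ _ h (hmem2 _ hp2)
      · rw [if_pos h, if_neg (by omega), if_pos h, if_neg (by omega)]
        simpa using hdec _ _ h (hmem1 _ hp1)
    linarith
  linarith
end

section
/- Let v_1 > ⋯ > v_n be real, ∑ v_i = 0, and S_1 ⊔ S_2 a partition of {1,…,n} into nonempty blocks. Define D = ∑_{i<j, i and j in different blocks} v_i. If each block has v-sum zero, then 2D = ∑_{i<j, different blocks} (v_i − v_j), and in particular D > 0. -/
open Finset

theorem cross_block_sum_positive (n : ℕ) (hn : 2 ≤ n) (v : ℕ → ℝ)
    (hdec : ∀ i j, i < j → j < n → v j < v i)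
    (hsum : ∑ i ∈ Finset.range n, v i = 0)
    (S1 S2 : Finset ℕ) (hpart : S1 ∪ S2 = Finset.range n)
    (hdisj : Disjoint S1 S2)
    (h1 : S1.Nonempty) (h2 : S2.Nonempty)
    (hs1 : ∑ i ∈ S1, v i = 0) (hs2 : ∑ i ∈ S2, v i = 0) :
    2 * (∑ i ∈ Finset.range n, ∑ j ∈ Finset.range n,
          if i < j ∧ ¬(i ∈ S1 ↔ j ∈ S1) then v i else 0)
      = (∑ i ∈ Finset.range n, ∑ j ∈ Finset.range n,
          if i < j ∧ ¬(i ∈ S1 ↔ j ∈ S1) then v i - v j else 0) ∧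
    0 < (∑ i ∈ Finset.range n, ∑ j ∈ Finset.range n,
          if i < j ∧ ¬(i ∈ S1 ↔ j ∈ S1) then v i else 0) := by
  have hS1sub : S1 ⊆ Finset.range n := hpart ▸ Finset.subset_union_left
  have hS2sub : S2 ⊆ Finset.range n := hpart ▸ Finset.subset_union_right
  have hnot12 : ∀ i, i ∈ S1 → i ∉ S2 := fun i h1i h2i =>
    (Finset.disjoint_left.mp hdisj) h1i h2i
  have hnot21 : ∀ i, i ∈ S2 → i ∉ S1 := fun i h2i h1i =>
    (Finset.disjoint_left.mp hdisj) h1i h2i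
  set A := ∑ i ∈ Finset.range n, ∑ j ∈ Finset.range n,
      if i < j ∧ ¬(i ∈ S1 ↔ j ∈ S1) then v i else 0 with hA
  set C := ∑ i ∈ Finset.range n, ∑ j ∈ Finset.range n,
      if i < j ∧ ¬(i ∈ S1 ↔ j ∈ S1) then v i - v j else 0 with hC
  -- total cross sum (no order condition) is zero
  have hT : ∑ i ∈ Finset.range n, ∑ j ∈ Finset.range n,
      (if ¬(i ∈ S1 ↔ j ∈ S1) then v i else 0) = 0 := by
    have inner : ∀ i ∈ Finset.range n,
        ∑ j ∈ Finset.range n, (if ¬(i ∈ S1 ↔ j ∈ S1) then v i else 0)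
        = if i ∈ S1 then (S2.card : ℝ) * v i else (S1.card : ℝ) * v i := by
      intro i _
      rw [← hpart, Finset.sum_union hdisj]
      by_cases hiS : i ∈ S1
      · have e1 : ∑ j ∈ S1, (if ¬(i ∈ S1 ↔ j ∈ S1) then v i else 0) = 0 := by
          apply Finset.sum_eq_zero; intro j hj; simp [hiS, hj]
        have e2 : ∑ j ∈ S2, (if ¬(i ∈ S1 ↔ j ∈ S1) then v i else 0)
            = (S2.card : ℝ) * v i := by
          rw [Finset.sum_congr rfl (g := fun _ => v i) fun j hj => by
              simp [hiS, hnot21 j hj]]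
          rw [Finset.sum_const, nsmul_eq_mul]
        rw [e1, e2, if_pos hiS, zero_add]
      · have e1 : ∑ j ∈ S1, (if ¬(i ∈ S1 ↔ j ∈ S1) then v i else 0)
            = (S1.card : ℝ) * v i := by
          rw [Finset.sum_congr rfl (g := fun _ => v i) fun j hj => by
              simp [hiS, hj]]
          rw [Finset.sum_const, nsmul_eq_mul]
        have e2 : ∑ j ∈ S2, (if ¬(i ∈ S1 ↔ j ∈ S1) then v i else 0) = 0 := by
          apply Finset.sum_eq_zero; intro j hj; simp [hiS, hnot21 j hj]
        rw [e1, e2, if_neg hiS, add_zero]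
    rw [Finset.sum_congr rfl inner, ← hpart, Finset.sum_union hdisj]
    have e1 : ∑ i ∈ S1, (if i ∈ S1 then (S2.card : ℝ) * v i else (S1.card : ℝ) * v i)
        = (S2.card : ℝ) * ∑ i ∈ S1, v i := by
      rw [Finset.mul_sum]
      exact Finset.sum_congr rfl fun i hi => by simp [hi]
    have e2 : ∑ i ∈ S2, (if i ∈ S1 then (S2.card : ℝ) * v i else (S1.card : ℝ) * v i)
        = (S1.card : ℝ) * ∑ i ∈ S2, v i := by
      rw [Finset.mul_sum]
      exact Finset.sum_congr rfl fun i hi => by simp [hnot21 i hi]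
    rw [e1, e2, hs1, hs2]; ring
  -- B = -A
  have hB : (∑ i ∈ Finset.range n, ∑ j ∈ Finset.range n,
      (if i < j ∧ ¬(i ∈ S1 ↔ j ∈ S1) then v j else 0)) = -A := by
    have hswap : (∑ i ∈ Finset.range n, ∑ j ∈ Finset.range n,
        (if i < j ∧ ¬(i ∈ S1 ↔ j ∈ S1) then v j else 0))
        = ∑ i ∈ Finset.range n, ∑ j ∈ Finset.range n,
        (if j < i ∧ ¬(j ∈ S1 ↔ i ∈ S1) then v i else 0) := Finset.sum_comm
    have key : A + (∑ i ∈ Finset.range n, ∑ j ∈ Finset.range n,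
        (if j < i ∧ ¬(j ∈ S1 ↔ i ∈ S1) then v i else 0))
        = ∑ i ∈ Finset.range n, ∑ j ∈ Finset.range n,
          (if ¬(i ∈ S1 ↔ j ∈ S1) then v i else 0) := by
      rw [hA, ← Finset.sum_add_distrib]
      apply Finset.sum_congr rfl; intro i _
      rw [← Finset.sum_add_distrib]
      apply Finset.sum_congr rfl; intro j _
      by_cases hc : i ∈ S1 ↔ j ∈ S1
      · have hc' : (j ∈ S1 ↔ i ∈ S1) := hc.symm
        rw [if_neg (fun hx => hx.2 hc), if_neg (fun hx => hx.2 hc'),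
          if_neg (not_not_intro hc), add_zero]
      · have hc' : ¬(j ∈ S1 ↔ i ∈ S1) := fun h => hc h.symm
        rcases lt_trichotomy i j with h | h | h
        · rw [if_pos ⟨h, hc⟩, if_neg (fun hx => Nat.lt_asymm h hx.1), if_pos hc,
            add_zero]
        · exact absurd (h ▸ Iff.rfl) hc
        · rw [if_neg (fun hx => Nat.lt_asymm h hx.1), if_pos ⟨h, hc'⟩, if_pos hc,
            zero_add]
    rw [hswap]; linarith [key, hT]
  -- C = 2A
  have hCA : C = 2 * A := by
    have : C = A - (∑ i ∈ Finset.range n, ∑ j ∈ Finset.range n,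
        (if i < j ∧ ¬(i ∈ S1 ↔ j ∈ S1) then v j else 0)) := by
      rw [hC, hA, ← Finset.sum_sub_distrib]
      apply Finset.sum_congr rfl; intro i _
      rw [← Finset.sum_sub_distrib]
      apply Finset.sum_congr rfl; intro j _
      split_ifs <;> ring
    rw [this, hB]; ring
  -- positivity of C
  have hCpos : 0 < C := by
    obtain ⟨a, ha⟩ := h1
    obtain ⟨b, hb⟩ := h2
    have hab : a ≠ b := fun h => hnot12 a ha (h ▸ hb)
    have han : a < n := Finset.mem_range.mp (hS1sub ha)
    have hbn : b < n := Finset.mem_range.mp (hS2sub hb)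
    have hbS1 : b ∉ S1 := hnot21 b hb
    set p := min a b with hp
    set q := max a b with hq
    have hpq : p < q := min_lt_max.mpr hab
    have hqn : q < n := max_lt han hbn
    have hpn : p < n := lt_of_le_of_lt (min_le_left a b) han
    have hcross : ¬(p ∈ S1 ↔ q ∈ S1) := by
      rcases le_total a b with h | h
      · rw [hp, hq, min_eq_left h, max_eq_right h]
        simp [ha, hbS1]
      · rw [hp, hq, min_eq_right h, max_eq_left h]
        simp [ha, hbS1]
    have hnn : ∀ i ∈ Finset.range n,
        (0:ℝ) ≤ ∑ j ∈ Finset.range n,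
          (if i < j ∧ ¬(i ∈ S1 ↔ j ∈ S1) then v i - v j else 0) := by
      intro i _
      apply Finset.sum_nonneg
      intro j hj
      split_ifs with h
      · exact le_of_lt (sub_pos.mpr (hdec i j h.1 (Finset.mem_range.mp hj)))
      · exact le_refl 0
    rw [hC]
    apply Finset.sum_pos' hnn
    refine ⟨p, Finset.mem_range.mpr hpn, ?_⟩
    apply Finset.sum_pos'
    · intro j hj
      split_ifs with h
      · exact le_of_lt (sub_pos.mpr (hdec p j h.1 (Finset.mem_range.mp hj)))
      · exact le_refl 0
    · refine ⟨q, Finset.mem_range.mpr hqn, ?_⟩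
      rw [if_pos ⟨hpq, hcross⟩]
      exact sub_pos.mpr (hdec p q hpq hqn)
  exact ⟨by linarith, by linarith⟩
end

section
/- Let v_1 > ⋯ > v_n be real with ∑ v_i = 0, and m ∈ {±1}^n. For every ε > 0 there is T_1 > 0 such that for all T ≥ T_1 and all 1 ≤ i ≤ n, the coefficient b_i of q_{T}(x) = ∏_{j=1}^n (x − m_j e^{T v_j}) (with sign convention q_T(x) = ∑ (−1)^{n−k} b_{n−k} x^k) satisfies (1−ε) e^{T(v_1+⋯+v_i)} ≤ b_i M_i ≤ (1+ε) e^{T(v_1+⋯+v_i)}, where M_i = ∏_{j=1}^i m_j. -/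
open Finset

private lemma sum_lt_of_ne_range (n : ℕ) (v : ℕ → ℝ)
    (hdec : ∀ i j, i < j → j < n → v j < v i)
    (S : Finset ℕ) (hS : S ⊆ Finset.range n) (hne : S ≠ Finset.range S.card) :
    ∑ j ∈ S, v j < ∑ j ∈ Finset.range S.card, v j := by
  set i := S.card with hi
  set f := S.orderEmbOfFin hi.symm with hf
  have himg : Finset.image (fun k => f k) Finset.univ = S := by
    apply Finset.coe_injective
    rw [Finset.coe_image, Finset.coe_univ, Set.image_univ]
    exact S.range_orderEmbOfFin hi.symm
  have hsum : ∑ j ∈ S, v j = ∑ k : Fin i, v (f k) := by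
    rw [← himg, Finset.sum_image (fun a _ b _ h => f.injective h)]
  have hle : ∀ k : Fin i, (k : ℕ) ≤ f k := by
    intro k
    obtain ⟨k, hk⟩ := k
    induction k with
    | zero => exact Nat.zero_le _
    | succ j ih =>
      have hj : j < i := Nat.lt_of_succ_lt hk
      have h1 := ih hj
      have h2 : f ⟨j, hj⟩ < f ⟨j + 1, hk⟩ := f.strictMono (by simp [Fin.lt_def])
      simp only [Fin.val_mk] at h1 ⊢
      omega
  have hmem : ∀ k : Fin i, f k < n := by
    intro k
    have : f k ∈ S := S.orderEmbOfFin_mem hi.symm k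
    exact Finset.mem_range.mp (hS this)
  have hvle : ∀ k : Fin i, v (f k) ≤ v k := by
    intro k
    rcases eq_or_lt_of_le (hle k) with h | h
    · rw [← h]
    · exact le_of_lt (hdec k (f k) h (hmem k))
  have hex : ∃ k : Fin i, (k : ℕ) < f k := by
    by_contra h
    push_neg at h
    apply hne
    have heq : ∀ k : Fin i, f k = (k : ℕ) := fun k => le_antisymm (h k) (hle k)
    apply Finset.coe_injective
    rw [← S.range_orderEmbOfFin hi.symm]
    ext x
    simp only [Set.mem_range, Finset.coe_range, Set.mem_Iio]
    constructor
    · rintro ⟨k, rfl⟩; rw [heq k]; exact k.2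
    · intro hx; exact ⟨⟨x, hx⟩, heq ⟨x, hx⟩⟩
  obtain ⟨k0, hk0⟩ := hex
  have hrange : ∑ j ∈ Finset.range i, v j = ∑ k : Fin i, v k := by
    rw [Finset.sum_range fun j => v j]
  rw [hsum, hrange]
  apply Finset.sum_lt_sum (fun k _ => hvle k)
  exact ⟨k0, Finset.mem_univ _, hdec k0 (f k0) hk0 (hmem k0)⟩

theorem model_coefficient_bounds (n : ℕ) (hn : 2 ≤ n) (v m : ℕ → ℝ)
    (hm : ∀ i < n, m i = 1 ∨ m i = -1)
    (hdec : ∀ i j, i < j → j < n → v j < v i)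
    (hsum : ∑ i ∈ Finset.range n, v i = 0)
    (ε : ℝ) (hε : 0 < ε) :
    ∃ T1 : ℝ, 0 < T1 ∧ ∀ T : ℝ, T1 ≤ T → ∀ i : ℕ, 1 ≤ i → i ≤ n →
      (1 - ε) * Real.exp (T * ∑ j ∈ Finset.range i, v j)
        ≤ (∑ S ∈ Finset.powersetCard i (Finset.range n),
            (∏ j ∈ S, m j) * Real.exp (T * ∑ j ∈ S, v j)) *
          (∏ j ∈ Finset.range i, m j) ∧
      (∑ S ∈ Finset.powersetCard i (Finset.range n),
          (∏ j ∈ S, m j) * Real.exp (T * ∑ j ∈ S, v j)) *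
        (∏ j ∈ Finset.range i, m j)
        ≤ (1 + ε) * Real.exp (T * ∑ j ∈ Finset.range i, v j) := by
  classical
  set gap : Finset ℕ → ℝ := fun S => ∑ j ∈ Finset.range S.card, v j - ∑ j ∈ S, v j
    with hgap
  set A : Finset (Finset ℕ) :=
    (Finset.range n).powerset.filter (fun S => S ≠ Finset.range S.card) with hA
  have hmemA : ∀ S, S ∈ A ↔ S ⊆ Finset.range n ∧ S ≠ Finset.range S.card := by
    intro S
    simp [hA, Finset.mem_filter, Finset.mem_powerset]
  have hAne : A.Nonempty := by
    refine ⟨{1}, (hmemA {1}).mpr ⟨?_, ?_⟩⟩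
    · intro x hx
      simp only [Finset.mem_singleton] at hx
      subst hx
      exact Finset.mem_range.mpr (by omega)
    · intro h
      have : (1 : ℕ) ∈ Finset.range ({1} : Finset ℕ).card := by rw [← h]; simp
      simp at this
  set δ : ℝ := A.inf' hAne gap with hδ
  have hδpos : 0 < δ := by
    rw [hδ, Finset.lt_inf'_iff]
    intro S hS
    obtain ⟨h1, h2⟩ := (hmemA S).mp hS
    have := sum_lt_of_ne_range n v hdec S h1 h2
    simp only [hgap]
    linarith
  refine ⟨max 1 (Real.log (2 ^ n / ε) / δ), lt_of_lt_of_le one_pos (le_max_left _ _),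
    fun T hT i h1i hin => ?_⟩
  have hT1 : (1 : ℝ) ≤ T := le_trans (le_max_left _ _) hT
  have hTpos : 0 < T := lt_of_lt_of_le one_pos hT1
  -- exp(-Tδ) ≤ ε / 2^n
  have h2n : (0 : ℝ) < 2 ^ n := by positivity
  have hexp : Real.exp (-(T * δ)) ≤ ε / 2 ^ n := by
    have hlog : Real.log (2 ^ n / ε) / δ ≤ T := le_trans (le_max_right _ _) hT
    have h1 : Real.log (2 ^ n / ε) ≤ T * δ := by
      rw [div_le_iff₀ hδpos] at hlog
      linarith
    have h2 : -(T * δ) ≤ Real.log (ε / 2 ^ n) := by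
      rw [show ε / 2 ^ n = (2 ^ n / ε)⁻¹ by field_simp, Real.log_inv]
      linarith
    calc Real.exp (-(T * δ)) ≤ Real.exp (Real.log (ε / 2 ^ n)) := Real.exp_le_exp.mpr h2
      _ = ε / 2 ^ n := Real.exp_log (by positivity)
  set E : ℝ := Real.exp (T * ∑ j ∈ Finset.range i, v j) with hE
  have hEpos : 0 < E := Real.exp_pos _
  have hri : Finset.range i ∈ Finset.powersetCard i (Finset.range n) :=
    Finset.mem_powersetCard.mpr ⟨Finset.range_subset_range.mpr hin, Finset.card_range i⟩
  set M : ℝ := ∏ j ∈ Finset.range i, m j with hM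
  have hMsq : M * M = 1 := by
    rw [hM, ← Finset.prod_mul_distrib]
    apply Finset.prod_eq_one
    intro j hj
    have hjn : j < n := lt_of_lt_of_le (Finset.mem_range.mp hj) hin
    rcases hm j hjn with h | h <;> rw [h] <;> norm_num
  -- |∏_{j∈S} m j| = 1 for S ⊆ range n
  have habs : ∀ S : Finset ℕ, S ⊆ Finset.range n → |∏ j ∈ S, m j| = 1 := by
    intro S hS
    rw [Finset.abs_prod]
    apply Finset.prod_eq_one
    intro j hj
    rcases hm j (Finset.mem_range.mp (hS hj)) with h | h <;> rw [h] <;> norm_num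
  set R : ℝ := ∑ S ∈ (Finset.powersetCard i (Finset.range n)).erase (Finset.range i),
    (∏ j ∈ S, m j) * Real.exp (T * ∑ j ∈ S, v j) with hR
  have hsplit : (∑ S ∈ Finset.powersetCard i (Finset.range n),
      (∏ j ∈ S, m j) * Real.exp (T * ∑ j ∈ S, v j)) * M = E + R * M := by
    rw [← Finset.add_sum_erase _ _ hri, ← hR, add_mul, ← hE, ← hM]
    ring_nf
    rw [show M ^ 2 = 1 by rw [sq]; exact hMsq]
    ring
  -- bound each term of R
  have hterm : ∀ S ∈ (Finset.powersetCard i (Finset.range n)).erase (Finset.range i),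
      |(∏ j ∈ S, m j) * Real.exp (T * ∑ j ∈ S, v j)| ≤ E * Real.exp (-(T * δ)) := by
    intro S hS
    obtain ⟨hne, hSm⟩ := Finset.mem_erase.mp hS
    obtain ⟨hsub, hcard⟩ := Finset.mem_powersetCard.mp hSm
    have hSA : S ∈ A := (hmemA S).mpr ⟨hsub, by rw [hcard]; exact hne⟩
    have hgapS : δ ≤ gap S := Finset.inf'_le _ hSA
    rw [abs_mul, habs S hsub, one_mul, abs_of_pos (Real.exp_pos _)]
    have h1 : T * ∑ j ∈ S, v j ≤ T * ∑ j ∈ Finset.range i, v j - T * δ := by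
      have h2 : ∑ j ∈ S, v j ≤ ∑ j ∈ Finset.range i, v j - δ := by
        have := hgapS
        simp only [hgap, hcard] at this
        linarith
      nlinarith [hTpos]
    calc Real.exp (T * ∑ j ∈ S, v j)
        ≤ Real.exp (T * ∑ j ∈ Finset.range i, v j - T * δ) := Real.exp_le_exp.mpr h1
      _ = E * Real.exp (-(T * δ)) := by rw [hE, ← Real.exp_add]; ring_nf
  have hcount : ((Finset.powersetCard i (Finset.range n)).erase (Finset.range i)).card
      ≤ 2 ^ n := by
    calc ((Finset.powersetCard i (Finset.range n)).erase (Finset.range i)).card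
        ≤ (Finset.powersetCard i (Finset.range n)).card := Finset.card_le_card
          (Finset.erase_subset _ _)
      _ ≤ (Finset.range n).powerset.card := Finset.card_le_card
          (fun x hx => Finset.mem_powerset.mpr (Finset.mem_powersetCard.mp hx).1)
      _ = 2 ^ n := by rw [Finset.card_powerset, Finset.card_range]
  have hRbound : |R| ≤ ε * E := by
    calc |R| ≤ ∑ S ∈ (Finset.powersetCard i (Finset.range n)).erase (Finset.range i),
        |(∏ j ∈ S, m j) * Real.exp (T * ∑ j ∈ S, v j)| := Finset.abs_sum_le_sum_abs _ _
      _ ≤ ∑ _S ∈ (Finset.powersetCard i (Finset.range n)).erase (Finset.range i),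
          E * Real.exp (-(T * δ)) := Finset.sum_le_sum hterm
      _ = ((Finset.powersetCard i (Finset.range n)).erase (Finset.range i)).card *
          (E * Real.exp (-(T * δ))) := by rw [Finset.sum_const, nsmul_eq_mul]
      _ ≤ 2 ^ n * (E * Real.exp (-(T * δ))) := by
          apply mul_le_mul_of_nonneg_right _ (by positivity)
          exact_mod_cast hcount
      _ ≤ 2 ^ n * (E * (ε / 2 ^ n)) := by
          apply mul_le_mul_of_nonneg_left _ (le_of_lt h2n)
          exact mul_le_mul_of_nonneg_left hexp (le_of_lt hEpos)
      _ = ε * E := by field_simp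
  have hRM : |R * M| ≤ ε * E := by
    rw [abs_mul, hM, habs _ (Finset.range_subset_range.mpr hin), mul_one]
    exact hRbound
  rw [hsplit]
  rw [abs_le] at hRM
  constructor <;> [linarith [hRM.1]; linarith [hRM.2]]
end

section
/- Let v_1 > ⋯ > v_n be real with ∑ v_i = 0. For 1 ≤ i ≤ n−1 and 1 ≤ j ≤ n define Δ_{i,j} = (∑_{k<j} v_k + (n−j+1)v_j) − (v_1 + ⋯ + v_{n−i} + i·v_j). Then Δ_{i,j} ≥ 0 for all such i, j. -/
open Finset

theorem Delta_nonneg (n : ℕ) (hn : 2 ≤ n) (v : ℕ → ℝ)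
    (hdec : ∀ i j, 1 ≤ i → i < j → j ≤ n → v j < v i)
    (hsum : ∑ i ∈ Finset.Icc 1 n, v i = 0)
    (i j : ℕ) (hi1 : 1 ≤ i) (hi2 : i ≤ n - 1) (hj1 : 1 ≤ j) (hj2 : j ≤ n) :
    0 ≤ ((∑ k ∈ Finset.Ico 1 j, v k) + ((n : ℝ) - (j : ℝ) + 1) * v j)
        - ((∑ k ∈ Finset.Icc 1 (n - i), v k) + (i : ℝ) * v j) := by
  have hin : i ≤ n := le_trans hi2 (Nat.sub_le n 1)
  set m := n - i with hm
  have hmn : (m : ℝ) = (n : ℝ) - (i : ℝ) := by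
    rw [hm, Nat.cast_sub hin]
  have hm1 : 1 ≤ m := by omega
  have hmn1 : m ≤ n - 1 := by omega
  rw [← Finset.Ico_add_one_right_eq_Icc]
  rcases le_or_gt j (m + 1) with h | h
  · -- j ≤ m+1 : split Ico 1 (m+1) = Ico 1 j + Ico j (m+1)
    rw [← Finset.sum_Ico_consecutive v hj1 h]
    have key : 0 ≤ ∑ k ∈ Finset.Ico j (m + 1), (v j - v k) := by
      apply Finset.sum_nonneg
      intro k hk
      simp only [Finset.mem_Ico] at hk
      rcases eq_or_lt_of_le hk.1 with h' | h'
      · simp [h']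
      · have := hdec j k hj1 h' (by omega)
        linarith
    have hcard : ∑ k ∈ Finset.Ico j (m + 1), (v j - v k)
        = ((m : ℝ) + 1 - (j : ℝ)) * v j - ∑ k ∈ Finset.Ico j (m + 1), v k := by
      rw [Finset.sum_sub_distrib, Finset.sum_const, Nat.card_Ico, nsmul_eq_mul,
        Nat.cast_sub h]
      push_cast
      ring
    have hv : ((m : ℝ) + 1 - (j : ℝ)) * v j
        = ((n : ℝ) - (j : ℝ) + 1) * v j - (i : ℝ) * v j := by
      rw [hmn]; ring
    linarith
  · -- m+1 < j : split Ico 1 j = Ico 1 (m+1) + Ico (m+1) j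
    rw [← Finset.sum_Ico_consecutive v (show 1 ≤ m + 1 by omega) (le_of_lt h)]
    have key : 0 ≤ ∑ k ∈ Finset.Ico (m + 1) j, (v k - v j) := by
      apply Finset.sum_nonneg
      intro k hk
      simp only [Finset.mem_Ico] at hk
      have := hdec k j (by omega) hk.2 hj2
      linarith
    have hcard : ∑ k ∈ Finset.Ico (m + 1) j, (v k - v j)
        = (∑ k ∈ Finset.Ico (m + 1) j, v k) - ((j : ℝ) - ((m : ℝ) + 1)) * v j := by
      rw [Finset.sum_sub_distrib, Finset.sum_const, Nat.card_Ico, nsmul_eq_mul,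
        Nat.cast_sub (le_of_lt h)]
      push_cast
      ring
    have hv : ((j : ℝ) - ((m : ℝ) + 1)) * v j
        = (i : ℝ) * v j - ((n : ℝ) - (j : ℝ) + 1) * v j := by
      rw [hmn]; ring
    linarith
end

section
/- Let n ≥ 2 and v_1 > ⋯ > v_n real with ∑ v_i = 0, m ∈ {±1}^n, and set c_n = 10(n−1)2^{n−1}. For all sufficiently small ε > 0 there exists T_0 > 0 such that for all T ≥ T_0: any monic real polynomial p of degree n whose coefficients a_i (in the convention p(x) = ∑ (−1)^{n−i} a_{n−i} x^i) satisfy (1−ε)e^{T(v_1+⋯+v_i)} ≤ a_i M_i ≤ (1+ε)e^{T(v_1+⋯+v_i)} for all 1 ≤ i ≤ n (with M_i = ∏_{j≤i} m_j) has n distinct real roots x_1, …, x_n with |x_i − m_i e^{T v_i}| ≤ c_n ε e^{T v_i} for each i. -/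
open Finset Polynomial

private lemma ivt_zero (p : Polynomial ℝ) {a b : ℝ} (hab : a < b)
    (h : p.eval a * p.eval b < 0) : ∃ x, a < x ∧ x < b ∧ p.eval x = 0 := by
  have hc : ContinuousOn (fun x => p.eval x) (Set.Icc a b) := p.continuous.continuousOn
  rcases mul_neg_iff.mp h with ⟨ha, hb⟩ | ⟨ha, hb⟩
  · obtain ⟨x, hx, hfx⟩ := intermediate_value_Ioo' hab.le hc (⟨hb, ha⟩ : (0:ℝ) ∈ Set.Ioo (p.eval b) (p.eval a))
    exact ⟨x, hx.1, hx.2, hfx⟩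
  · obtain ⟨x, hx, hfx⟩ := intermediate_value_Ioo hab.le hc (⟨ha, hb⟩ : (0:ℝ) ∈ Set.Ioo (p.eval a) (p.eval b))
    exact ⟨x, hx.1, hx.2, hfx⟩

private lemma prod_pm (m : ℕ → ℝ) (i : ℕ) (hm : ∀ k < i, m k = 1 ∨ m k = -1) :
    (∏ k ∈ Finset.range i, m k) = 1 ∨ (∏ k ∈ Finset.range i, m k) = -1 := by
  induction i with
  | zero => simp
  | succ k ih =>
    rw [Finset.prod_range_succ]
    rcases ih (fun a ha => hm a (by omega)) with h | h <;>
      rcases hm k (by omega) with h2 | h2 <;> rw [h, h2] <;> norm_num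

set_option maxHeartbeats 2000000 in
private lemma key_root (n : ℕ) (hn : 2 ≤ n) (v m : ℕ → ℝ)
    (hdec : ∀ i j, i < j → j < n → v j < v i)
    (hm : ∀ i < n, m i = 1 ∨ m i = -1)
    (ε δ g T : ℝ) (hε : 0 < ε)
    (hc20 : 20 * ε ≤ δ) (hδ2 : δ ≤ 1/2)
    (hgpos : 0 < g)
    (hvg : ∀ a b, a < b → b < n → g ≤ v a - v b)
    (hT1 : 1 ≤ T)
    (hTK : ((n:ℝ)+1) * 2 * 4^n ≤ ε * Real.exp (T * g))
    (p : Polynomial ℝ) (hdeg : p.natDegree ≤ n)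
    (b : ℕ → ℝ)
    (hbco : ∀ i, i ≤ n → p.coeff (n - i) = (-1:ℝ)^i * b i * (∏ k ∈ Finset.range i, m k))
    (hb : ∀ i, i ≤ n → (1-ε) * Real.exp (T * ∑ k ∈ Finset.range i, v k) ≤ b i ∧
          b i ≤ (1+ε) * Real.exp (T * ∑ k ∈ Finset.range i, v k))
    (j : ℕ) (hj1 : 1 ≤ j) (hjn : j ≤ n) :
    ∃ x : ℝ, p.eval x = 0 ∧
      |x - m (j-1) * Real.exp (T * v (j-1))| < δ * Real.exp (T * v (j-1)) := by
  have hε2 : ε ≤ 1/2 := by linarith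
  have hδpos : 0 < δ := by linarith
  -- abbreviations
  set S : ℕ → ℝ := fun i => ∑ k ∈ Finset.range i, v k with hSdef
  set M : ℕ → ℝ := fun i => ∏ k ∈ Finset.range i, m k with hMdef
  have hS : ∀ i, (∑ k ∈ Finset.range i, v k) = S i := fun i => by rw [hSdef]
  have hM : ∀ i, (∏ k ∈ Finset.range i, m k) = M i := fun i => by rw [hMdef]
  simp only [hM] at hbco
  simp only [hS] at hb
  set w := v (j - 1) with hwdef
  set e := Real.exp (T * w) with hedef
  have hepos : 0 < e := Real.exp_pos _
  have hmpm : m (j-1) = 1 ∨ m (j-1) = -1 := hm (j-1) (by omega)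
  have hmm : m (j-1) * m (j-1) = 1 := by rcases hmpm with h | h <;> rw [h] <;> norm_num
  have hmabs : |m (j-1)| = 1 := by rcases hmpm with h | h <;> rw [h] <;> norm_num
  have hMpm : ∀ i, i ≤ n → M i = 1 ∨ M i = -1 := by
    intro i hi
    rw [hMdef]
    exact prod_pm m i (fun k hk => hm k (by omega))
  have hMabs : ∀ i, i ≤ n → |M i| = 1 := by
    intro i hi; rcases hMpm i hi with h | h <;> rw [h] <;> norm_num
  have hMj : M j = M (j-1) * m (j-1) := by
    rw [hMdef]
    have h2 : j - 1 + 1 = j := by omega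
    conv_lhs => rw [← h2]
    exact Finset.prod_range_succ m (j-1)
  have hSj : S j = S (j-1) + w := by
    rw [hSdef, hwdef]
    have h2 : j - 1 + 1 = j := by omega
    conv_lhs => rw [← h2]
    exact Finset.sum_range_succ v (j-1)
  have hbpos : ∀ i, i ≤ n → 0 < b i := by
    intro i hi
    have := (hb i hi).1
    nlinarith [Real.exp_pos (T * S i)]
  -- the evaluation formula
  have heval : ∀ t : ℝ, p.eval t =
      ∑ i ∈ Finset.range (n+1), (-1:ℝ)^i * b i * M i * t^(n-i) := by
    intro t
    rw [Polynomial.eval_eq_sum_range' (by omega : p.natDegree < n+1) t,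
      ← Finset.sum_range_reflect (fun i => p.coeff i * t ^ i) (n+1)]
    apply Finset.sum_congr rfl
    intro i hi
    have hi' : i ≤ n := by simp only [Finset.mem_range] at hi; omega
    have h1 : n + 1 - 1 - i = n - i := by omega
    simp only [h1, hbco i hi']
  -- the gap estimate
  have hgap : ∀ i, i ≤ n → i ≠ j → i ≠ j - 1 →
      S i + ((n:ℝ) - i) * w ≤ S j + ((n:ℝ) - j) * w - g := by
    intro i hi hij hij1
    rcases Nat.lt_or_ge i j with hlt | hge
    · -- i < j - 1
      have hij2 : i < j - 1 := by omega
      have hsub : S j - S i = ∑ k ∈ Finset.Ico i j, v k := by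
        rw [hSdef]; exact (Finset.sum_Ico_eq_sub v (by omega)).symm
      have hterm : ∀ k ∈ Finset.Ico i j, 0 ≤ v k - w := by
        intro k hk
        rw [Finset.mem_Ico] at hk
        rcases Nat.lt_or_ge k (j-1) with h | h
        · have := hdec k (j-1) h (by omega); rw [hwdef]; linarith
        · have : k = j - 1 := by omega
          rw [this, hwdef]; linarith
      have hone : g ≤ v i - w := hvg i (j-1) hij2 (by omega)
      have hsum_ge : g ≤ ∑ k ∈ Finset.Ico i j, (v k - w) :=
        le_trans hone (Finset.single_le_sum hterm (by rw [Finset.mem_Ico]; omega))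
      have hexp : ∑ k ∈ Finset.Ico i j, (v k - w) = (S j - S i) - ((j:ℝ) - i) * w := by
        rw [Finset.sum_sub_distrib, ← hsub, Finset.sum_const, Nat.card_Ico, nsmul_eq_mul]
        have : ((j - i : ℕ) : ℝ) = (j:ℝ) - i := by
          rw [Nat.cast_sub (by omega)]
        rw [this]
      rw [hexp] at hsum_ge
      have hji : ((j:ℝ) - i) = ((n:ℝ) - i) - ((n:ℝ) - j) := by ring
      linarith
    · -- j < i
      have hji : j < i := by omega
      have hsub : S i - S j = ∑ k ∈ Finset.Ico j i, v k := by
        rw [hSdef]; exact (Finset.sum_Ico_eq_sub v (by omega)).symm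
      have hterm : ∀ k ∈ Finset.Ico j i, 0 ≤ w - v k := by
        intro k hk
        rw [Finset.mem_Ico] at hk
        have := hdec (j-1) k (by omega) (by omega)
        rw [hwdef]; linarith
      have hone : g ≤ w - v j := by
        have := hvg (j-1) j (by omega) (by omega)
        rw [hwdef]; linarith
      have hsum_ge : g ≤ ∑ k ∈ Finset.Ico j i, (w - v k) :=
        le_trans hone (Finset.single_le_sum hterm (by rw [Finset.mem_Ico]; omega))
      have hexp : ∑ k ∈ Finset.Ico j i, (w - v k) = ((i:ℝ) - j) * w - (S i - S j) := by
        rw [Finset.sum_sub_distrib, ← hsub, Finset.sum_const, Nat.card_Ico, nsmul_eq_mul]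
        have : ((i - j : ℕ) : ℝ) = (i:ℝ) - j := by
          rw [Nat.cast_sub (by omega)]
        rw [this]
      rw [hexp] at hsum_ge
      linarith
  -- sign quantity
  set s : ℝ := (-1:ℝ)^j * M j * (m (j-1))^(n-j) with hsdef
  have habs_s : |s| = 1 := by
    rw [hsdef, abs_mul, abs_mul, abs_pow, abs_pow, abs_neg, abs_one, one_pow,
      hMabs j hjn, hmabs, one_pow]
    norm_num
  have hs2 : s * s = 1 := by
    rcases abs_eq (le_of_lt one_pos) |>.mp habs_s with h | h <;> rw [h] <;> norm_num
  -- the main sign estimate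
  have hmain : ∀ σ : ℝ, (σ = 1 ∨ σ = -1) →
      s * p.eval (m (j-1) * (e * (1 + σ * δ))) * σ < 0 := by
    intro σ hσ
    have habs_σ : |σ| = 1 := by rcases hσ with h | h <;> rw [h] <;> norm_num
    have hσδ1 : 1/2 ≤ 1 + σ * δ := by rcases hσ with h | h <;> rw [h] <;> linarith
    have hσδ2 : 1 + σ * δ ≤ 3/2 := by rcases hσ with h | h <;> rw [h] <;> linarith
    set r : ℝ := e * (1 + σ * δ) with hrdef
    have hrpos : 0 < r := by rw [hrdef]; nlinarith
    have hEj : Real.exp (T * S j) = Real.exp (T * S (j-1)) * e := by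
      rw [hedef, ← Real.exp_add, ← mul_add, ← hSj]
    have hEjpos : (0:ℝ) < Real.exp (T * S j) := Real.exp_pos _
    -- D estimate
    have hD : (b j - b (j-1) * r) * σ ≤ -(2 * ε) * Real.exp (T * S j) := by
      have hbj := hb j hjn
      have hbj1 := hb (j-1) (by omega)
      have hE1pos : (0:ℝ) < Real.exp (T * S (j-1)) := Real.exp_pos _
      rcases hσ with h | h <;> subst h
      · have h4 : (1-ε) * (1+1*δ) * Real.exp (T * S j) ≤ b (j-1) * r := by
          have step : (1-ε) * Real.exp (T * S (j-1)) * r ≤ b (j-1) * r :=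
            mul_le_mul_of_nonneg_right hbj1.1 hrpos.le
          calc (1-ε) * (1+1*δ) * Real.exp (T * S j)
              = (1-ε) * Real.exp (T * S (j-1)) * r := by rw [hEj, hrdef]; ring
            _ ≤ b (j-1) * r := step
        have hεδ : ε*δ ≤ (1/2)*δ := mul_le_mul_of_nonneg_right hε2 hδpos.le
        have hsc : (1+ε) - (1-ε)*(1+1*δ) ≤ -(2*ε) := by nlinarith [hεδ, hc20]
        have h5 : ((1+ε) - (1-ε)*(1+1*δ)) * Real.exp (T * S j)
            ≤ -(2*ε) * Real.exp (T * S j) :=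
          mul_le_mul_of_nonneg_right hsc hEjpos.le
        nlinarith [hbj.2, h4, h5]
      · have h4 : b (j-1) * r ≤ (1+ε) * (1+(-1)*δ) * Real.exp (T * S j) := by
          have step : b (j-1) * r ≤ (1+ε) * Real.exp (T * S (j-1)) * r :=
            mul_le_mul_of_nonneg_right hbj1.2 hrpos.le
          calc b (j-1) * r ≤ (1+ε) * Real.exp (T * S (j-1)) * r := step
            _ = (1+ε) * (1+(-1)*δ) * Real.exp (T * S j) := by rw [hEj, hrdef]; ring
        have hεδ : 0 ≤ ε*δ := by positivity
        have hsc : (1+ε)*(1+(-1)*δ) - (1-ε) ≤ -(2*ε) := by nlinarith [hεδ, hc20]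
        have h5 : ((1+ε)*(1+(-1)*δ) - (1-ε)) * Real.exp (T * S j)
            ≤ -(2*ε) * Real.exp (T * S j) :=
          mul_le_mul_of_nonneg_right hsc hEjpos.le
        nlinarith [hbj.1, h4, h5]
    -- split the sum
    have hjmem : j ∈ Finset.range (n+1) := Finset.mem_range.mpr (by omega)
    have hj1mem : j - 1 ∈ (Finset.range (n+1)).erase j :=
      Finset.mem_erase.mpr ⟨by omega, Finset.mem_range.mpr (by omega)⟩
    have hsplit : p.eval (m (j-1) * r) =
        (-1:ℝ)^j * b j * M j * (m (j-1) * r)^(n-j)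
        + ((-1:ℝ)^(j-1) * b (j-1) * M (j-1) * (m (j-1) * r)^(n-(j-1))
          + ∑ i ∈ ((Finset.range (n+1)).erase j).erase (j-1),
              (-1:ℝ)^i * b i * M i * (m (j-1) * r)^(n-i)) := by
      rw [heval (m (j-1) * r),
        ← Finset.add_sum_erase _ (fun i => (-1:ℝ)^i * b i * M i * (m (j-1) * r)^(n-i)) hjmem,
        ← Finset.add_sum_erase _ (fun i => (-1:ℝ)^i * b i * M i * (m (j-1) * r)^(n-i)) hj1mem]
    -- the dominant pair
    have hpair : (-1:ℝ)^j * b j * M j * (m (j-1) * r)^(n-j)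
        + (-1:ℝ)^(j-1) * b (j-1) * M (j-1) * (m (j-1) * r)^(n-(j-1))
        = s * ((b j - b (j-1) * r) * r^(n-j)) := by
      have hp1 : n - (j-1) = (n - j) + 1 := by omega
      have hs1 : (-1:ℝ)^j = (-1)^(j-1) * (-1) := by
        have h2 : j - 1 + 1 = j := by omega
        conv_lhs => rw [← h2]
        rw [pow_succ]
      rw [hsdef, hp1, pow_succ, mul_pow (m (j-1)) r (n-j), hMj, hs1]
      ring
    -- remainder bound
    have hrest : |∑ i ∈ ((Finset.range (n+1)).erase j).erase (j-1),
        (-1:ℝ)^i * b i * M i * (m (j-1) * r)^(n-i)|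
        ≤ ε * Real.exp (T * S j) * r^(n-j) := by
      set B : ℝ := 2 * 2^n * Real.exp (T * (S j + ((n:ℝ)-j)*w) - T*g) with hBdef
      have hBpos : 0 < B := by rw [hBdef]; positivity
      have hFbound : ∀ i ∈ ((Finset.range (n+1)).erase j).erase (j-1),
          |(-1:ℝ)^i * b i * M i * (m (j-1) * r)^(n-i)| ≤ B := by
        intro i hi
        rw [Finset.mem_erase, Finset.mem_erase, Finset.mem_range] at hi
        obtain ⟨hij1, hij, hin'⟩ := hi
        have hin : i ≤ n := by omega
        have habs1 : |(-1:ℝ)^i * b i * M i * (m (j-1) * r)^(n-i)| = b i * r^(n-i) := by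
          rw [abs_mul, abs_mul, abs_mul, abs_pow, abs_pow, abs_neg, abs_one, one_pow,
            hMabs i hin, abs_mul, hmabs, one_mul, abs_of_pos (hbpos i hin),
            abs_of_pos hrpos]
          ring
        rw [habs1]
        have hrle : r ≤ e * (3/2) := by
          rw [hrdef]
          have := mul_le_mul_of_nonneg_left hσδ2 hepos.le
          linarith
        have hr1 : r^(n-i) ≤ (e * (3/2))^(n-i) := pow_le_pow_left₀ hrpos.le hrle _
        have hr2 : (e * (3/2))^(n-i) = e^(n-i) * (3/2)^(n-i) := mul_pow _ _ _
        have hr3 : ((3:ℝ)/2)^(n-i) ≤ 2^n := by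
          calc ((3:ℝ)/2)^(n-i) ≤ 2^(n-i) :=
                pow_le_pow_left₀ (by norm_num) (by norm_num) _
            _ ≤ 2^n := pow_le_pow_right₀ (by norm_num) (by omega)
        have hre : e^(n-i) = Real.exp (((n:ℝ)-i) * (T * w)) := by
          rw [hedef, ← Real.exp_nat_mul]
          congr 1
          rw [Nat.cast_sub hin]
        have hb2 : b i ≤ (1+ε) * Real.exp (T * S i) := (hb i hin).2
        have hbipos := hbpos i hin
        have hEipos : (0:ℝ) < Real.exp (T * S i) := Real.exp_pos _
        calc b i * r^(n-i)
            ≤ ((1+ε) * Real.exp (T * S i)) * (e^(n-i) * (3/2)^(n-i)) := by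
              rw [← hr2]
              exact mul_le_mul hb2 hr1 (pow_nonneg hrpos.le _) (by positivity)
          _ ≤ ((1+ε) * Real.exp (T * S i)) * (e^(n-i) * 2^n) := by
              have : (0:ℝ) ≤ (1+ε) * Real.exp (T * S i) := by positivity
              have he2 : (0:ℝ) ≤ e^(n-i) := by positivity
              exact mul_le_mul_of_nonneg_left
                (mul_le_mul_of_nonneg_left hr3 he2) this
          _ = (1+ε) * 2^n * Real.exp (T * S i + ((n:ℝ)-i) * (T * w)) := by
              rw [hre, Real.exp_add]
              ring
          _ ≤ 2 * 2^n * Real.exp (T * (S j + ((n:ℝ)-j)*w) - T*g) := by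
              have harg : T * S i + ((n:ℝ)-i) * (T * w)
                  ≤ T * (S j + ((n:ℝ)-j)*w) - T*g := by
                have h0 := hgap i hin hij hij1
                have := mul_le_mul_of_nonneg_left h0 (by linarith : (0:ℝ) ≤ T)
                linarith [this]
              gcongr
              linarith
      have hcard : ((((Finset.range (n+1)).erase j).erase (j-1)).card : ℝ) ≤ (n:ℝ)+1 := by
        have h1 : (((Finset.range (n+1)).erase j).erase (j-1)).card ≤ (Finset.range (n+1)).card :=
          le_trans (Finset.card_erase_le) (Finset.card_erase_le)
        rw [Finset.card_range] at h1
        exact_mod_cast h1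
      have hsum1 : |∑ i ∈ ((Finset.range (n+1)).erase j).erase (j-1),
          (-1:ℝ)^i * b i * M i * (m (j-1) * r)^(n-i)|
          ≤ ((n:ℝ)+1) * B := by
        calc |∑ i ∈ ((Finset.range (n+1)).erase j).erase (j-1),
            (-1:ℝ)^i * b i * M i * (m (j-1) * r)^(n-i)|
            ≤ ∑ i ∈ ((Finset.range (n+1)).erase j).erase (j-1),
              |(-1:ℝ)^i * b i * M i * (m (j-1) * r)^(n-i)| :=
              Finset.abs_sum_le_sum_abs _ _
          _ ≤ (((Finset.range (n+1)).erase j).erase (j-1)).card • B :=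
              Finset.sum_le_card_nsmul _ _ _ hFbound
          _ = ((((Finset.range (n+1)).erase j).erase (j-1)).card : ℝ) * B := nsmul_eq_mul _ _
          _ ≤ ((n:ℝ)+1) * B := mul_le_mul_of_nonneg_right hcard hBpos.le
      refine le_trans hsum1 ?_
      -- ((n:ℝ)+1) * B ≤ ε * exp(T * S j) * r^(n-j)
      have hsplit_exp : Real.exp (T * (S j + ((n:ℝ)-j)*w) - T*g)
          = Real.exp (T * S j) * (e^(n-j) * Real.exp (-(T*g))) := by
        rw [hedef, ← Real.exp_nat_mul, ← Real.exp_add, ← Real.exp_add]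
        congr 1
        rw [Nat.cast_sub hjn]
        ring
      have h2r : e ≤ 2 * r := by
        rw [hrdef]; nlinarith
      have hY : e^(n-j) ≤ 2^n * r^(n-j) := by
        calc e^(n-j) ≤ (2*r)^(n-j) := pow_le_pow_left₀ hepos.le h2r _
          _ = 2^(n-j) * r^(n-j) := mul_pow _ _ _
          _ ≤ 2^n * r^(n-j) :=
              mul_le_mul_of_nonneg_right (pow_le_pow_right₀ (by norm_num) (by omega))
                (pow_nonneg hrpos.le _)
      have hZ : ((n:ℝ)+1) * 2 * 4^n * Real.exp (-(T*g)) ≤ ε := by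
        have hZe : Real.exp (T*g) * Real.exp (-(T*g)) = 1 := by
          rw [← Real.exp_add]; simp
        have h1 := mul_le_mul_of_nonneg_right hTK (Real.exp_pos (-(T*g))).le
        calc ((n:ℝ)+1) * 2 * 4^n * Real.exp (-(T*g)) ≤ ε * Real.exp (T*g) * Real.exp (-(T*g)) := h1
          _ = ε * (Real.exp (T*g) * Real.exp (-(T*g))) := by ring
          _ = ε := by rw [hZe, mul_one]
      have h4n : (4:ℝ)^n = 2^n * 2^n := by rw [← mul_pow]; norm_num
      calc ((n:ℝ)+1) * B
          = ((n:ℝ)+1) * (2 * 2^n * (Real.exp (T * S j) * (e^(n-j) * Real.exp (-(T*g))))) := by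
            rw [hBdef, hsplit_exp]
        _ ≤ ((n:ℝ)+1) * (2 * 2^n * (Real.exp (T * S j) * ((2^n * r^(n-j)) * Real.exp (-(T*g))))) := by
            gcongr
        _ = (((n:ℝ)+1) * 2 * 4^n * Real.exp (-(T*g))) * (Real.exp (T * S j) * r^(n-j)) := by
            rw [h4n]; ring
        _ ≤ ε * (Real.exp (T * S j) * r^(n-j)) :=
            mul_le_mul_of_nonneg_right hZ (by positivity)
        _ = ε * Real.exp (T * S j) * r^(n-j) := by ring
    -- combine
    have hexpand : s * p.eval (m (j-1) * r) * σ
        = s * s * ((b j - b (j-1) * r) * σ * r^(n-j))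
          + s * (∑ i ∈ ((Finset.range (n+1)).erase j).erase (j-1),
              (-1:ℝ)^i * b i * M i * (m (j-1) * r)^(n-i)) * σ := by
      rw [hsplit]; linear_combination (σ * s) * hpair
    rw [hs2, one_mul] at hexpand
    have h6 : (b j - b (j-1) * r) * σ * r^(n-j)
        ≤ -(2*ε) * Real.exp (T * S j) * r^(n-j) :=
      mul_le_mul_of_nonneg_right hD (pow_nonneg hrpos.le _)
    have h7 : s * (∑ i ∈ ((Finset.range (n+1)).erase j).erase (j-1),
        (-1:ℝ)^i * b i * M i * (m (j-1) * r)^(n-i)) * σ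
        ≤ ε * Real.exp (T * S j) * r^(n-j) := by
      calc s * (∑ i ∈ ((Finset.range (n+1)).erase j).erase (j-1),
          (-1:ℝ)^i * b i * M i * (m (j-1) * r)^(n-i)) * σ
          ≤ |s * (∑ i ∈ ((Finset.range (n+1)).erase j).erase (j-1),
            (-1:ℝ)^i * b i * M i * (m (j-1) * r)^(n-i)) * σ| := le_abs_self _
        _ = |∑ i ∈ ((Finset.range (n+1)).erase j).erase (j-1),
            (-1:ℝ)^i * b i * M i * (m (j-1) * r)^(n-i)| := by
            rw [abs_mul, abs_mul, habs_s, habs_σ, one_mul, mul_one]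
        _ ≤ ε * Real.exp (T * S j) * r^(n-j) := hrest
    have hpos : (0:ℝ) < ε * Real.exp (T * S j) * r^(n-j) := by positivity
    rw [hexpand]
    linarith
  have h1 := hmain 1 (Or.inl rfl)
  have h2 := hmain (-1) (Or.inr rfl)
  have hq1 : s * p.eval (m (j-1) * (e * (1 + 1 * δ))) < 0 := by linarith
  have hq2 : 0 < s * p.eval (m (j-1) * (e * (1 + -1 * δ))) := by nlinarith
  have hprod : p.eval (m (j-1) * (e * (1 + -1 * δ)))
      * p.eval (m (j-1) * (e * (1 + 1 * δ))) < 0 := by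
    have hmulneg := mul_neg_of_pos_of_neg hq2 hq1
    have heq : (s * p.eval (m (j-1) * (e * (1 + -1 * δ))))
        * (s * p.eval (m (j-1) * (e * (1 + 1 * δ))))
        = (s * s) * (p.eval (m (j-1) * (e * (1 + -1 * δ)))
          * p.eval (m (j-1) * (e * (1 + 1 * δ)))) := by ring
    rw [heq, hs2, one_mul] at hmulneg
    exact hmulneg
  rcases hmpm with hm1 | hm1
  · have ha : m (j-1) * (e * (1 + -1 * δ)) < m (j-1) * (e * (1 + 1 * δ)) := by
      rw [hm1]; nlinarith
    obtain ⟨x, hx1, hx2, hx0⟩ := ivt_zero p ha hprod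
    refine ⟨x, hx0, ?_⟩
    rw [hm1] at hx1 hx2 ⊢
    rw [abs_lt]
    constructor <;> nlinarith
  · have ha : m (j-1) * (e * (1 + 1 * δ)) < m (j-1) * (e * (1 + -1 * δ)) := by
      rw [hm1]; nlinarith
    have hprod' : p.eval (m (j-1) * (e * (1 + 1 * δ)))
        * p.eval (m (j-1) * (e * (1 + -1 * δ))) < 0 := by
      rw [mul_comm] at hprod; exact hprod
    obtain ⟨x, hx1, hx2, hx0⟩ := ivt_zero p ha hprod'
    refine ⟨x, hx0, ?_⟩
    rw [hm1] at hx1 hx2 ⊢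
    rw [abs_lt]
    constructor <;> nlinarith

set_option maxHeartbeats 1000000 in
theorem root_approximation (n : ℕ) (hn : 2 ≤ n) (v m : ℕ → ℝ)
    (hdec : ∀ i j, i < j → j < n → v j < v i)
    (hsum : ∑ i ∈ Finset.range n, v i = 0)
    (hm : ∀ i < n, m i = 1 ∨ m i = -1) :
    ∃ ε0 : ℝ, 0 < ε0 ∧ ∀ ε : ℝ, 0 < ε → ε ≤ ε0 →
      ∃ T0 : ℝ, 0 < T0 ∧ ∀ T : ℝ, T0 ≤ T →
        ∀ p : Polynomial ℝ, p.Monic → p.natDegree = n →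
          (∀ i : ℕ, 1 ≤ i → i ≤ n →
            (1 - ε) * Real.exp (T * ∑ j ∈ Finset.range i, v j)
              ≤ ((-1 : ℝ) ^ i * p.coeff (n - i)) * ∏ j ∈ Finset.range i, m j ∧
            ((-1 : ℝ) ^ i * p.coeff (n - i)) * ∏ j ∈ Finset.range i, m j
              ≤ (1 + ε) * Real.exp (T * ∑ j ∈ Finset.range i, v j)) →
          ∃ x : Fin n → ℝ, Function.Injective x ∧
            (∀ i : Fin n, p.eval (x i) = 0) ∧
            ∀ i : Fin n,
              |x i - m i * Real.exp (T * v i)|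
                ≤ (10 * ((n : ℝ) - 1) * 2 ^ (n - 1)) * ε * Real.exp (T * v i) := by
  set c : ℝ := 10 * ((n : ℝ) - 1) * 2 ^ (n - 1) with hcdef
  have hc20 : (20:ℝ) ≤ c := by
    rw [hcdef]
    have h1 : (1:ℝ) ≤ (n:ℝ) - 1 := by
      have : (2:ℝ) ≤ (n:ℝ) := by exact_mod_cast hn
      linarith
    have h2 : (2:ℝ) ≤ 2^(n-1) := by
      calc (2:ℝ) = 2^1 := (pow_one 2).symm
        _ ≤ 2^(n-1) := pow_le_pow_right₀ (by norm_num) (by omega)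
    nlinarith
  have hcpos : (0:ℝ) < c := by linarith
  refine ⟨1/(2*c), by positivity, ?_⟩
  intro ε hε hεle
  set δ : ℝ := c * ε with hδdef
  have hδpos : 0 < δ := by rw [hδdef]; positivity
  have hδ2 : δ ≤ 1/2 := by
    rw [hδdef]
    calc c * ε ≤ c * (1/(2*c)) := mul_le_mul_of_nonneg_left hεle hcpos.le
      _ = 1/2 := by field_simp
  have hc20' : 20 * ε ≤ δ := by rw [hδdef]; nlinarith
  have hε1 : ε ≤ 1 := by linarith
  -- the minimal gap
  have hne : (Finset.range (n-1)).Nonempty := ⟨0, Finset.mem_range.mpr (by omega)⟩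
  set g : ℝ := (Finset.range (n-1)).inf' hne (fun k => v k - v (k+1)) with hgdef
  have hgpos : 0 < g := by
    rw [hgdef, Finset.lt_inf'_iff]
    intro k hk
    rw [Finset.mem_range] at hk
    have := hdec k (k+1) (by omega) (by omega)
    linarith
  have hvg : ∀ a b, a < b → b < n → g ≤ v a - v b := by
    intro a bb hab hbn
    have h1 : g ≤ v (bb-1) - v bb := by
      have h2 : g ≤ v (bb-1) - v (bb-1+1) := by
        rw [hgdef]
        exact Finset.inf'_le _ (Finset.mem_range.mpr (by omega))
      have h3 : bb - 1 + 1 = bb := by omega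
      rwa [h3] at h2
    rcases Nat.lt_or_ge a (bb-1) with h | h
    · have := hdec a (bb-1) h (by omega)
      linarith
    · have ha : a = bb - 1 := by omega
      rw [ha]; exact h1
  -- T0
  set K : ℝ := ((n:ℝ)+1) * 2 * 4^n with hKdef
  have hKpos : 0 < K := by rw [hKdef]; positivity
  refine ⟨max 1 (Real.log (K / ε) / g), lt_of_lt_of_le one_pos (le_max_left _ _), ?_⟩
  intro T hT
  have hT1 : 1 ≤ T := le_trans (le_max_left _ _) hT
  have hTK : ((n:ℝ)+1) * 2 * 4^n ≤ ε * Real.exp (T * g) := by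
    rw [← hKdef]
    have h1 : Real.log (K / ε) / g ≤ T := le_trans (le_max_right _ _) hT
    have h2 : Real.log (K / ε) ≤ T * g := by
      rw [div_le_iff₀ hgpos] at h1; linarith
    have h3 : K / ε ≤ Real.exp (T * g) := by
      calc K / ε = Real.exp (Real.log (K / ε)) := (Real.exp_log (by positivity)).symm
        _ ≤ Real.exp (T * g) := Real.exp_le_exp.mpr h2
    rw [div_le_iff₀ hε] at h3
    linarith [h3]
  intro p hmonic hdeg hp
  have hbco : ∀ i, i ≤ n → p.coeff (n - i)
      = (-1:ℝ)^i * (((-1:ℝ)^i * p.coeff (n-i)) * ∏ k ∈ Finset.range i, m k)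
        * (∏ k ∈ Finset.range i, m k) := by
    intro i hi
    have hMsq : (∏ k ∈ Finset.range i, m k) * (∏ k ∈ Finset.range i, m k) = 1 := by
      rcases prod_pm m i (fun k hk => hm k (by omega)) with h | h <;> rw [h] <;> norm_num
    have hss : ((-1:ℝ)^i) * ((-1:ℝ)^i) = 1 := by
      rw [← pow_add]
      exact Even.neg_one_pow ⟨i, rfl⟩
    calc p.coeff (n-i)
        = (((-1:ℝ)^i * (-1:ℝ)^i) * p.coeff (n-i))
          * ((∏ k ∈ Finset.range i, m k) * (∏ k ∈ Finset.range i, m k)) := by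
          rw [hss, hMsq]; ring
      _ = (-1:ℝ)^i * (((-1:ℝ)^i * p.coeff (n-i)) * ∏ k ∈ Finset.range i, m k)
          * (∏ k ∈ Finset.range i, m k) := by ring
  have hb : ∀ i, i ≤ n →
      (1 - ε) * Real.exp (T * ∑ k ∈ Finset.range i, v k)
        ≤ ((-1:ℝ)^i * p.coeff (n-i)) * ∏ k ∈ Finset.range i, m k ∧
      ((-1:ℝ)^i * p.coeff (n-i)) * ∏ k ∈ Finset.range i, m k
        ≤ (1 + ε) * Real.exp (T * ∑ k ∈ Finset.range i, v k) := by
    intro i hi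
    rcases Nat.eq_zero_or_pos i with h0 | h1
    · subst h0
      have hc1 : p.coeff n = 1 := by rw [← hdeg]; exact hmonic.coeff_natDegree
      simp only [Finset.range_zero, Finset.sum_empty, Finset.prod_empty, pow_zero,
        one_mul, mul_one, Nat.sub_zero, mul_zero, Real.exp_zero, hc1]
      constructor <;> linarith
    · exact hp i h1 hi
  have key := fun (i : Fin n) =>
    key_root n hn v m hdec hm ε δ g T hε hc20' hδ2 hgpos hvg hT1 hTK p (le_of_eq hdeg)
      (fun i => ((-1:ℝ)^i * p.coeff (n-i)) * ∏ k ∈ Finset.range i, m k) hbco hb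
      ((i:ℕ)+1) (by omega) (by omega)
  have hroots : ∀ i : Fin n, ∃ x : ℝ, p.eval x = 0 ∧
      |x - m i * Real.exp (T * v i)| < δ * Real.exp (T * v i) := by
    intro i
    obtain ⟨x, hx0, hxe⟩ := key i
    have heq : (i:ℕ) + 1 - 1 = (i:ℕ) := by omega
    rw [heq] at hxe
    exact ⟨x, hx0, hxe⟩
  choose x hx0 hxe using hroots
  refine ⟨x, ?_, hx0, ?_⟩
  · -- injectivity via separated absolute values
    have hmabs : ∀ i : Fin n, |m i * Real.exp (T * v i)| = Real.exp (T * v i) := by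
      intro i
      rw [abs_mul, abs_of_pos (Real.exp_pos _)]
      rcases hm i i.isLt with h | h <;> rw [h] <;> norm_num
    have hlow : ∀ i : Fin n, (1 - δ) * Real.exp (T * v i) < |x i| := by
      intro i
      have h1 := hxe i
      have h2 : |m i * Real.exp (T * v i)| - |x i| ≤ |x i - m i * Real.exp (T * v i)| := by
        rw [abs_sub_comm]
        exact abs_sub_abs_le_abs_sub _ _
      rw [hmabs i] at h2
      nlinarith [Real.exp_pos (T * v i)]
    have hhigh : ∀ i : Fin n, |x i| < (1 + δ) * Real.exp (T * v i) := by
      intro i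
      have h1 := hxe i
      have h2 : |x i| - |m i * Real.exp (T * v i)| ≤ |x i - m i * Real.exp (T * v i)| :=
        abs_sub_abs_le_abs_sub _ _
      rw [hmabs i] at h2
      nlinarith [Real.exp_pos (T * v i)]
    have h3K : (3:ℝ) ≤ K := by
      rw [hKdef]
      have h4 : (1:ℝ) ≤ 4^n := by
        calc (1:ℝ) = 1^n := (one_pow n).symm
          _ ≤ 4^n := pow_le_pow_left₀ (by norm_num) (by norm_num) n
      have hn2 : (2:ℝ) ≤ (n:ℝ) := by exact_mod_cast hn
      nlinarith
    have h3 : (3:ℝ) ≤ Real.exp (T * g) := by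
      have hKTK : K ≤ ε * Real.exp (T * g) := by rw [hKdef]; exact hTK
      nlinarith [Real.exp_pos (T * g)]
    have hsep : ∀ a b : Fin n, (a:ℕ) < (b:ℕ) → |x b| < |x a| := by
      intro a b hab
      have hgab := hvg a b hab b.isLt
      have hexp : 3 * Real.exp (T * v b) ≤ Real.exp (T * v a) := by
        have heq : Real.exp (T * v a)
            = Real.exp (T * v b) * Real.exp (T * (v a - v b)) := by
          rw [← Real.exp_add]; ring_nf
        rw [heq]
        have hTg : T * g ≤ T * (v a - v b) :=
          mul_le_mul_of_nonneg_left hgab (by linarith)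
        have h5 := le_trans h3 (Real.exp_le_exp.mpr hTg)
        nlinarith [Real.exp_pos (T * v b)]
      nlinarith [hlow a, hhigh b, hδ2, hδpos,
        Real.exp_pos (T * v b), Real.exp_pos (T * v a)]
    intro a b hab
    by_contra hne
    rcases Nat.lt_or_ge (a:ℕ) (b:ℕ) with h | h
    · have := hsep a b h
      rw [hab] at this
      exact absurd this (lt_irrefl _)
    · have hba : (b:ℕ) < (a:ℕ) := by
        rcases Nat.lt_or_ge (b:ℕ) (a:ℕ) with h2 | h2
        · exact h2
        · exact absurd (Fin.ext (by omega)) hne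
      have := hsep b a hba
      rw [hab] at this
      exact absurd this (lt_irrefl _)
  · intro i
    exact (hxe i).le
end

section
/- Let m_1, …, m_n ∈ {±1}, v_1 > ⋯ > v_n real, c_n ε ≤ 1/4, and T large enough that e^{T v_j} ≥ 2 e^{T v_{j+1}} for all j < n. Then the closed discs D_j = {x ∈ ℂ : |x − m_j e^{T v_j}| ≤ c_n ε e^{T v_j}}, 1 ≤ j ≤ n, are pairwise disjoint, and for x ∈ ∂D_j one has ∏_{i=1}^n |x − m_i e^{T v_i}| ≥ c_n ε (1/2 − c_n ε)^{n−1} e^{T(∑_{i<j} v_i) + (n−j+1)T v_j}. -/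
open Finset

private lemma gap_chain (n : ℕ) (v : ℕ → ℝ) (T : ℝ)
    (hgap : ∀ j, 1 ≤ j → j < n →
      2 * Real.exp (T * v (j + 1)) ≤ Real.exp (T * v j)) :
    ∀ j k, 1 ≤ j → j < k → k ≤ n → 2 * Real.exp (T * v k) ≤ Real.exp (T * v j) := by
  intro j k hj
  induction k with
  | zero => intro h1 h2; omega
  | succ k ih =>
    intro hjk hk
    rcases Nat.lt_or_ge j k with h | h
    · have h1 := ih h (by omega)
      have h2 := hgap k (by omega) (by omega)
      nlinarith [Real.exp_pos (T * v k), Real.exp_pos (T * v (k + 1))]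
    · have hjk' : j = k := by omega
      subst hjk'
      exact hgap j hj (by omega)

theorem discs_disjoint_and_lower_bound (n : ℕ) (hn : 1 ≤ n) (v m : ℕ → ℝ)
    (hm : ∀ i, 1 ≤ i → i ≤ n → m i = 1 ∨ m i = -1)
    (hdec : ∀ i j, 1 ≤ i → i < j → j ≤ n → v j < v i)
    (ε : ℝ) (hε : 0 < ε)
    (hsmall : (10 * ((n : ℝ) - 1) * 2 ^ (n - 1)) * ε ≤ 1 / 4)
    (T : ℝ)
    (hgap : ∀ j, 1 ≤ j → j < n →
      2 * Real.exp (T * v (j + 1)) ≤ Real.exp (T * v j)) :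
    (∀ j ∈ Finset.Icc 1 n, ∀ k ∈ Finset.Icc 1 n, j ≠ k →
      Disjoint
        (Metric.closedBall ((m j * Real.exp (T * v j) : ℝ) : ℂ)
          ((10 * ((n : ℝ) - 1) * 2 ^ (n - 1)) * ε * Real.exp (T * v j)))
        (Metric.closedBall ((m k * Real.exp (T * v k) : ℝ) : ℂ)
          ((10 * ((n : ℝ) - 1) * 2 ^ (n - 1)) * ε * Real.exp (T * v k)))) ∧
    (∀ j ∈ Finset.Icc 1 n,
      ∀ x ∈ Metric.sphere ((m j * Real.exp (T * v j) : ℝ) : ℂ)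
          ((10 * ((n : ℝ) - 1) * 2 ^ (n - 1)) * ε * Real.exp (T * v j)),
        (10 * ((n : ℝ) - 1) * 2 ^ (n - 1)) * ε *
            (1 / 2 - (10 * ((n : ℝ) - 1) * 2 ^ (n - 1)) * ε) ^ (n - 1) *
            Real.exp (T * (∑ i ∈ Finset.Ico 1 j, v i)
              + ((n : ℝ) - (j : ℝ) + 1) * T * v j)
          ≤ ∏ i ∈ Finset.Icc 1 n,
              ‖x - ((m i * Real.exp (T * v i) : ℝ) : ℂ)‖) := by
  set c : ℝ := 10 * ((n : ℝ) - 1) * 2 ^ (n - 1) with hc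
  have hn1 : (1 : ℝ) ≤ (n : ℝ) := by exact_mod_cast hn
  have hc0 : 0 ≤ c := by
    have h1 : (0 : ℝ) ≤ (n : ℝ) - 1 := by linarith
    have h2 : (0 : ℝ) ≤ (2 : ℝ) ^ (n - 1) := by positivity
    rw [hc]; nlinarith
  have hcε : 0 ≤ c * ε := mul_nonneg hc0 hε.le
  have hq : c * ε ≤ 1 / 4 := hsmall
  set E : ℕ → ℝ := fun j => Real.exp (T * v j) with hE
  have hEpos : ∀ j, 0 < E j := fun j => Real.exp_pos _
  have hchain : ∀ j k, 1 ≤ j → j < k → k ≤ n → 2 * E k ≤ E j :=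
    gap_chain n v T hgap
  set ctr : ℕ → ℂ := fun j => ((m j * E j : ℝ) : ℂ) with hctr
  -- distance between centers
  have hdd : ∀ j k, 1 ≤ j → j < k → k ≤ n → E j - E k ≤ dist (ctr j) (ctr k) := by
    intro j k hj hjk hk
    have hmj : |m j| = 1 := by
      rcases hm j hj (by omega) with h | h <;> simp [h]
    have hmk : |m k| = 1 := by
      rcases hm k (by omega) hk with h | h <;> simp [h]
    rw [hctr, Complex.dist_eq]
    have heq : ((m j * E j : ℝ) : ℂ) - ((m k * E k : ℝ) : ℂ)
        = ((m j * E j - m k * E k : ℝ) : ℂ) := by push_cast; ring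
    rw [heq, Complex.norm_real, Real.norm_eq_abs]
    have h1 : |m j * E j| = E j := by
      rw [abs_mul, hmj, one_mul, abs_of_pos (hEpos j)]
    have h2 : |m k * E k| = E k := by
      rw [abs_mul, hmk, one_mul, abs_of_pos (hEpos k)]
    calc E j - E k = |m j * E j| - |m k * E k| := by rw [h1, h2]
      _ ≤ |m j * E j - m k * E k| := abs_sub_abs_le_abs_sub _ _
  constructor
  · -- disjointness
    have key : ∀ j k, 1 ≤ j → j < k → k ≤ n →
        Disjoint (Metric.closedBall (ctr j) (c * ε * E j))
          (Metric.closedBall (ctr k) (c * ε * E k)) := by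
      intro j k hj hjk hk
      apply Metric.closedBall_disjoint_closedBall
      have h1 := hchain j k hj hjk hk
      have h2 := hdd j k hj hjk hk
      have h3 := hEpos j
      have h4 := hEpos k
      nlinarith [mul_nonneg (by linarith : (0:ℝ) ≤ 1/4 - c * ε) (by linarith : (0:ℝ) ≤ E j + E k)]
    intro j hj k hk hjk
    simp only [Finset.mem_Icc] at hj hk
    rcases Nat.lt_or_ge j k with h | h
    · exact key j k hj.1 h hk.2
    · exact (key k j hk.1 (by omega) hj.2).symm
  · -- lower bound
    intro j hj x hx
    simp only [Finset.mem_Icc] at hj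
    obtain ⟨hj1, hjn⟩ := hj
    rw [Metric.mem_sphere] at hx
    set g : ℕ → ℝ := fun i =>
      if i = j then c * ε * E j else if i < j then (1/2 - c * ε) * E i
        else (1/2 - c * ε) * E j with hg
    have hgnn : ∀ i, 0 ≤ g i := by
      intro i
      rw [hg]
      dsimp only
      split_ifs <;>
        exact mul_nonneg (by linarith) (hEpos _).le
    have hx' : dist x (ctr j) = c * ε * E j := hx
    have hgle : ∀ i ∈ Finset.Icc 1 n, g i ≤ ‖x - ctr i‖ := by
      intro i hi
      simp only [Finset.mem_Icc] at hi
      have hfd : ‖x - ctr i‖ = dist x (ctr i) := (dist_eq_norm _ _).symm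
      rw [hfd, hg]
      dsimp only
      rcases eq_or_ne i j with rfl | hne
      · rw [if_pos rfl, hx']
      · rw [if_neg hne]
        have htri : dist (ctr i) (ctr j) - dist x (ctr j) ≤ dist x (ctr i) := by
          have := dist_triangle (ctr i) x (ctr j)
          have h1 : dist (ctr i) x = dist x (ctr i) := dist_comm _ _
          linarith
        rw [hx'] at htri
        rcases Nat.lt_or_ge i j with h | h
        · rw [if_pos h]
          have h1 := hdd i j hi.1 h hjn
          have h2 := hchain i j hi.1 h hjn
          have h3 := hEpos i
          have h4 := hEpos j
          have h5 : c * ε * E j ≤ c * ε * E i := by nlinarith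
          nlinarith
        · have h' : j < i := by omega
          rw [if_neg (by omega)]
          have h1 := hdd j i hj1 h' hi.2
          have h2 := hchain j i hj1 h' hi.2
          have hdsymm : dist (ctr i) (ctr j) = dist (ctr j) (ctr i) := dist_comm _ _
          rw [hdsymm] at htri
          have h3 := hEpos i
          linarith
    have hprodle : ∏ i ∈ Finset.Icc 1 n, g i ≤
        ∏ i ∈ Finset.Icc 1 n, ‖x - ctr i‖ :=
      Finset.prod_le_prod (fun i _ => hgnn i) hgle
    -- compute the product of g
    have hIcc : Finset.Icc 1 n = Finset.Ico 1 (n + 1) := (Finset.Ico_add_one_right_eq_Icc 1 n).symm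
    have hsplit : ∏ i ∈ Finset.Icc 1 n, g i =
        (∏ i ∈ Finset.Ico 1 j, g i) * (g j * ∏ i ∈ Finset.Ico (j + 1) (n + 1), g i) := by
      rw [hIcc, ← Finset.prod_Ico_consecutive g hj1 (by omega : j ≤ n + 1),
        Finset.prod_eq_prod_Ico_succ_bot (by omega : j < n + 1)]
    have hleft : ∏ i ∈ Finset.Ico 1 j, g i =
        (1/2 - c * ε) ^ (j - 1) * Real.exp (T * ∑ i ∈ Finset.Ico 1 j, v i) := by
      have : ∀ i ∈ Finset.Ico 1 j, g i = (1/2 - c * ε) * E i := by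
        intro i hi
        simp only [Finset.mem_Ico] at hi
        rw [hg]
        dsimp only
        rw [if_neg (by omega), if_pos hi.2]
      rw [Finset.prod_congr rfl this, Finset.prod_mul_distrib, Finset.prod_const,
        Nat.card_Ico]
      congr 1
      rw [hE]
      dsimp only
      rw [← Real.exp_sum, Finset.mul_sum]
    have hright : ∏ i ∈ Finset.Ico (j + 1) (n + 1), g i =
        ((1/2 - c * ε) * E j) ^ (n - j) := by
      have : ∀ i ∈ Finset.Ico (j + 1) (n + 1), g i = (1/2 - c * ε) * E j := by
        intro i hi
        simp only [Finset.mem_Ico] at hi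
        rw [hg]
        dsimp only
        rw [if_neg (by omega), if_neg (by omega)]
      rw [Finset.prod_congr rfl this, Finset.prod_const, Nat.card_Ico]
      congr 1
      omega
    have hgj : g j = c * ε * E j := by rw [hg]; simp
    have hLHS : c * ε * (1/2 - c * ε) ^ (n - 1) *
        Real.exp (T * (∑ i ∈ Finset.Ico 1 j, v i) + ((n : ℝ) - (j : ℝ) + 1) * T * v j)
        = ∏ i ∈ Finset.Icc 1 n, g i := by
      rw [hsplit, hleft, hright, hgj]
      have hcast : ((n : ℝ) - (j : ℝ) + 1) = ((n - j + 1 : ℕ) : ℝ) := by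
        push_cast [Nat.cast_sub hjn]
        ring
      rw [Real.exp_add, hcast]
      have hexp : Real.exp (((n - j + 1 : ℕ) : ℝ) * T * v j) = E j ^ (n - j + 1) := by
        rw [hE]
        dsimp only
        rw [← Real.exp_nat_mul]
        ring_nf
      rw [hexp]
      have hpow : (1/2 - c * ε) ^ (n - 1) = (1/2 - c * ε) ^ (j - 1) * (1/2 - c * ε) ^ (n - j) := by
        rw [← pow_add]
        congr 1
        omega
      have hpow2 : E j ^ (n - j + 1) = E j * E j ^ (n - j) := by
        rw [pow_succ]
        ring
      rw [hpow, hpow2, mul_pow]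
      ring
    calc c * ε * (1/2 - c * ε) ^ (n - 1) *
        Real.exp (T * (∑ i ∈ Finset.Ico 1 j, v i) + ((n : ℝ) - (j : ℝ) + 1) * T * v j)
        = ∏ i ∈ Finset.Icc 1 n, g i := hLHS
      _ ≤ ∏ i ∈ Finset.Icc 1 n, ‖x - ctr i‖ := hprodle
end
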